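/- Let W be the hyperoctahedral group S_3 ⋉ (Z/2Z)^3 acting on the torus T = (C*)^3 by permutation of coordinates and inversion of individual coordinates, and let Γ be a finite subgroup of T invariant under the subgroup of W generated by coordinate permutations and the pairwise sign-inversions (t1,t2,t3) ↦ (t1^{-1}, t2^{-1}, t3) etc. Then there exists a positive integer n such that Γ is isomorphic to μ_n^3, or n is even and Γ ≅ μ_n^2 × μ_{n/2}, or n is even and Γ ≅ μ_n × μ_{n/2}^2. -/

import Mathlib

/-- The three-dimensional torus `T = (ℂ*)³`. -/
abbrev T3 : Type := ℂˣ × ℂˣ × ℂˣ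

/-- Abbreviation for the abstract group `μ_a × μ_b × μ_c`. -/
abbrev MZ (a b c : ℕ) : Type :=
  Multiplicative (ZMod a) × Multiplicative (ZMod b) × Multiplicative (ZMod c)

open Multiplicative

namespace Stmt11Aux

variable {m : ℕ}

lemma odd_sq (h2 : ¬ 2 ∣ m) (y : ZMod m) : ∃ c : ZMod m, c + c = y := by
  refine ⟨(((m + 1) / 2 : ℕ) : ZMod m) * y, ?_⟩
  have hd : (m + 1) / 2 + (m + 1) / 2 = m + 1 := by omega
  have e1 : ((((m + 1) / 2 : ℕ) : ZMod m) + (((m + 1) / 2 : ℕ) : ZMod m)) = 1 := by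
    rw [← Nat.cast_add, hd]
    simp [ZMod.natCast_self]
  rw [← add_mul, e1, one_mul]

lemma even_iff [NeZero m] (h2 : 2 ∣ m) (y : ZMod m) :
    ZMod.castHom h2 (ZMod 2) y = 0 ↔ ∃ c : ZMod m, c + c = y := by
  constructor
  · intro h
    have hv : (y.val : ZMod 2) = 0 := by
      rw [ZMod.natCast_val]
      rwa [ZMod.castHom_apply] at h
    have hdvd : 2 ∣ y.val := by
      rwa [ZMod.natCast_eq_zero_iff] at hv
    obtain ⟨c, hc⟩ := hdvd
    refine ⟨(c : ZMod m), ?_⟩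
    rw [← Nat.cast_add]
    have : c + c = y.val := by omega
    rw [this, ZMod.natCast_zmod_val]
  · rintro ⟨c, rfl⟩
    rw [map_add]
    exact (by decide : ∀ a : ZMod 2, a + a = 0) _

/-- The "doubling" embedding `ZMod (m/2) →+ ZMod m`. -/
def dbl (m : ℕ) (h2 : 2 ∣ m) : ZMod (m / 2) →+ ZMod m :=
  ZMod.lift (m / 2) ⟨zmultiplesHom (ZMod m) (2 : ZMod m), by
    rw [zmultiplesHom_apply, natCast_zsmul, nsmul_eq_mul]
    have : ((m / 2 : ℕ) : ZMod m) * 2 = ((m / 2 * 2 : ℕ) : ZMod m) := by push_cast; ring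
    rw [this, Nat.div_mul_cancel h2, ZMod.natCast_self]⟩

lemma dbl_natCast (h2 : 2 ∣ m) (c : ℕ) :
    dbl m h2 (c : ZMod (m / 2)) = ((2 * c : ℕ) : ZMod m) := by
  have e : ((c : ℤ) : ZMod (m / 2)) = (c : ZMod (m / 2)) := by push_cast; rfl
  rw [← e, dbl, ZMod.lift_coe, zmultiplesHom_apply, zsmul_eq_mul]
  push_cast; ring

lemma dbl_cast (hm : m ≠ 0) (h2 : 2 ∣ m) (a : ZMod (m / 2)) :
    ZMod.castHom h2 (ZMod 2) (dbl m h2 a) = 0 := by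
  haveI : NeZero (m / 2) := ⟨by omega⟩
  have : a = ((a.val : ℕ) : ZMod (m / 2)) := (ZMod.natCast_zmod_val a).symm
  rw [this, dbl_natCast, map_natCast]
  rw [ZMod.natCast_eq_zero_iff]
  exact ⟨a.val, rfl⟩

lemma dbl_injective (hm : m ≠ 0) (h2 : 2 ∣ m) : Function.Injective (dbl m h2) := by
  haveI : NeZero m := ⟨hm⟩
  haveI : NeZero (m / 2) := ⟨by omega⟩
  rw [injective_iff_map_eq_zero]
  intro a ha
  have e : a = ((a.val : ℕ) : ZMod (m / 2)) := (ZMod.natCast_zmod_val a).symm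
  rw [e, dbl_natCast, ZMod.natCast_eq_zero_iff] at ha
  obtain ⟨d, hd⟩ := ha
  have hm2 : m = 2 * (m / 2) := by omega
  have hd' : 2 * a.val = 2 * (m / 2 * d) := hd.trans (by rw [← mul_assoc, ← hm2])
  have hval : (m / 2) ∣ a.val := ⟨d, Nat.eq_of_mul_eq_mul_left (by norm_num) hd'⟩
  rw [e, ZMod.natCast_eq_zero_iff]
  exact hval

lemma dbl_surj (hm : m ≠ 0) (h2 : 2 ∣ m) (y : ZMod m)
    (hy : ZMod.castHom h2 (ZMod 2) y = 0) : ∃ a, dbl m h2 a = y := by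
  haveI : NeZero m := ⟨hm⟩
  have hv : (y.val : ZMod 2) = 0 := by
    rw [ZMod.natCast_val]; rwa [ZMod.castHom_apply] at hy
  rw [ZMod.natCast_eq_zero_iff] at hv
  obtain ⟨c, hc⟩ := hv
  refine ⟨(c : ZMod (m / 2)), ?_⟩
  rw [dbl_natCast, ← hc, ZMod.natCast_zmod_val]

/-- cyclic shift -/
def cycP {α β γ : Type*} (x : α × β × γ) : γ × α × β := (x.2.2, x.1, x.2.1)

def Ksum : Subgroup (MZ 2 2 2) where
  carrier := {v | v.1 * v.2.1 * v.2.2 = 1}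
  one_mem' := by decide
  mul_mem' {a b} ha hb :=
    (by decide : ∀ a b : MZ 2 2 2, a.1 * a.2.1 * a.2.2 = 1 → b.1 * b.2.1 * b.2.2 = 1 →
      (a * b).1 * (a * b).2.1 * (a * b).2.2 = 1) a b ha hb
  inv_mem' {a} ha :=
    (by decide : ∀ a : MZ 2 2 2, a.1 * a.2.1 * a.2.2 = 1 →
      (a⁻¹).1 * (a⁻¹).2.1 * (a⁻¹).2.2 = 1) a ha

lemma mem_Ksum {v : MZ 2 2 2} : v ∈ Ksum ↔ v.1 * v.2.1 * v.2.2 = 1 := Iff.rfl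

def Kdiag : Subgroup (MZ 2 2 2) where
  carrier := {v | v.1 = v.2.1 ∧ v.2.1 = v.2.2}
  one_mem' := by decide
  mul_mem' {a b} ha hb :=
    (by decide : ∀ a b : MZ 2 2 2, (a.1 = a.2.1 ∧ a.2.1 = a.2.2) → (b.1 = b.2.1 ∧ b.2.1 = b.2.2) →
      ((a * b).1 = (a * b).2.1 ∧ (a * b).2.1 = (a * b).2.2)) a b ha hb
  inv_mem' {a} ha :=
    (by decide : ∀ a : MZ 2 2 2, (a.1 = a.2.1 ∧ a.2.1 = a.2.2) →
      ((a⁻¹).1 = (a⁻¹).2.1 ∧ (a⁻¹).2.1 = (a⁻¹).2.2)) a ha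

lemma mem_Kdiag {v : MZ 2 2 2} : v ∈ Kdiag ↔ (v.1 = v.2.1 ∧ v.2.1 = v.2.2) := Iff.rfl

local notation "gg" => (ofAdd (1 : ZMod 2) : Multiplicative (ZMod 2))

lemma enum2 : ∀ a : Multiplicative (ZMod 2), a = 1 ∨ a = gg := by decide

lemma enum8 : ∀ v : MZ 2 2 2, v = 1 ∨ v = (gg, 1, 1) ∨ v = (1, gg, 1) ∨ v = (1, 1, gg) ∨
    v = (gg, gg, 1) ∨ v = (1, gg, gg) ∨ v = (gg, 1, gg) ∨ v = (gg, gg, gg) := by decide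

lemma classifyV (V : Subgroup (MZ 2 2 2))
    (hcyc : ∀ v : MZ 2 2 2, v ∈ V → cycP v ∈ V)
    (hproj : ∃ v ∈ V, v.1 = gg) :
    V = ⊤ ∨ V = Ksum ∨ V = Kdiag := by
  by_cases hw1 : ((gg, 1, 1) : MZ 2 2 2) ∈ V ∨ ((1, gg, 1) : MZ 2 2 2) ∈ V ∨
      ((1, 1, gg) : MZ 2 2 2) ∈ V
  · left
    have he1 : ((gg, 1, 1) : MZ 2 2 2) ∈ V := by
      rcases hw1 with h | h | h
      · exact h
      · exact hcyc _ (hcyc _ h)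
      · exact hcyc _ h
    have he2 : ((1, gg, 1) : MZ 2 2 2) ∈ V := hcyc _ he1
    have he3 : ((1, 1, gg) : MZ 2 2 2) ∈ V := hcyc _ he2
    rw [eq_top_iff]
    rintro ⟨a, b, c⟩ -
    have ha : ((a, 1, 1) : MZ 2 2 2) ∈ V := by
      rcases enum2 a with rfl | rfl
      · exact one_mem V
      · exact he1
    have hb : ((1, b, 1) : MZ 2 2 2) ∈ V := by
      rcases enum2 b with rfl | rfl
      · exact one_mem V
      · exact he2
    have hc : ((1, 1, c) : MZ 2 2 2) ∈ V := by
      rcases enum2 c with rfl | rfl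
      · exact one_mem V
      · exact he3
    have hrw : ((a, b, c) : MZ 2 2 2) = (a, 1, 1) * (1, b, 1) * (1, 1, c) := by
      simp [Prod.ext_iff]
    rw [hrw]
    exact mul_mem (mul_mem ha hb) hc
  · push_neg at hw1
    obtain ⟨hn1, hn2, hn3⟩ := hw1
    by_cases hw2 : ((gg, gg, 1) : MZ 2 2 2) ∈ V ∨ ((1, gg, gg) : MZ 2 2 2) ∈ V ∨
        ((gg, 1, gg) : MZ 2 2 2) ∈ V
    · right; left
      have h21 : ((gg, gg, 1) : MZ 2 2 2) ∈ V := by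
        rcases hw2 with h | h | h
        · exact h
        · exact hcyc _ (hcyc _ h)
        · exact hcyc _ h
      have h22 : ((1, gg, gg) : MZ 2 2 2) ∈ V := hcyc _ h21
      have h23 : ((gg, 1, gg) : MZ 2 2 2) ∈ V := hcyc _ h22
      have hggg : ((gg, gg, gg) : MZ 2 2 2) ∉ V := by
        intro h
        have hmm := mul_mem h h21
        have e : ((gg, gg, gg) : MZ 2 2 2) * (gg, gg, 1) = (1, 1, gg) := by decide
        rw [e] at hmm
        exact hn3 hmm
      apply le_antisymm
      · intro v hv
        rcases enum8 v with rfl | rfl | rfl | rfl | rfl | rfl | rfl | rfl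
        · exact one_mem _
        · exact absurd hv hn1
        · exact absurd hv hn2
        · exact absurd hv hn3
        · exact mem_Ksum.2 (by decide)
        · exact mem_Ksum.2 (by decide)
        · exact mem_Ksum.2 (by decide)
        · exact absurd hv hggg
      · intro v hv
        rw [mem_Ksum] at hv
        rcases enum8 v with rfl | rfl | rfl | rfl | rfl | rfl | rfl | rfl
        · exact one_mem V
        · exact absurd hv (by decide)
        · exact absurd hv (by decide)
        · exact absurd hv (by decide)
        · exact h21
        · exact h22
        · exact h23
        · exact absurd hv (by decide)
    · right; right
      push_neg at hw2
      obtain ⟨hm1, hm2, hm3⟩ := hw2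
      obtain ⟨v, hv, hv1⟩ := hproj
      have hvggg : v = (gg, gg, gg) := by
        rcases enum8 v with rfl | rfl | rfl | rfl | rfl | rfl | rfl | rfl
        · exact absurd hv1 (by decide)
        · exact absurd hv hn1
        · exact absurd hv1 (by decide)
        · exact absurd hv1 (by decide)
        · exact absurd hv hm1
        · exact absurd hv1 (by decide)
        · exact absurd hv hm3
        · rfl
      subst hvggg
      apply le_antisymm
      · intro u hu
        rcases enum8 u with rfl | rfl | rfl | rfl | rfl | rfl | rfl | rfl
        · exact one_mem _
        · exact absurd hu hn1
        · exact absurd hu hn2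
        · exact absurd hu hn3
        · exact absurd hu hm1
        · exact absurd hu hm2
        · exact absurd hu hm3
        · exact mem_Kdiag.2 (by decide)
      · intro u hu
        rw [mem_Kdiag] at hu
        rcases enum8 u with rfl | rfl | rfl | rfl | rfl | rfl | rfl | rfl
        · exact one_mem V
        · exact absurd hu (by decide)
        · exact absurd hu (by decide)
        · exact absurd hu (by decide)
        · exact absurd hu (by decide)
        · exact absurd hu (by decide)
        · exact absurd hu (by decide)
        · exact hv


def castMH (m : ℕ) (h2 : 2 ∣ m) : Multiplicative (ZMod m) →* Multiplicative (ZMod 2) :=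
  AddMonoidHom.toMultiplicative (ZMod.castHom h2 (ZMod 2)).toAddMonoidHom

lemma castMH_apply (h2 : 2 ∣ m) (x : Multiplicative (ZMod m)) :
    castMH m h2 x = ofAdd (ZMod.castHom h2 (ZMod 2) x.toAdd) := rfl

def chi (m : ℕ) (h2 : 2 ∣ m) : MZ m m m →* MZ 2 2 2 :=
  (castMH m h2).prodMap ((castMH m h2).prodMap (castMH m h2))

lemma chi_apply (h2 : 2 ∣ m) (x : MZ m m m) :
    chi m h2 x = (castMH m h2 x.1, castMH m h2 x.2.1, castMH m h2 x.2.2) := rfl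

def dblM (m : ℕ) (h2 : 2 ∣ m) : Multiplicative (ZMod (m / 2)) →* Multiplicative (ZMod m) :=
  AddMonoidHom.toMultiplicative (dbl m h2)

lemma castMH_dblM (hm : m ≠ 0) (h2 : 2 ∣ m) (a : Multiplicative (ZMod (m / 2))) :
    castMH m h2 (dblM m h2 a) = 1 := by
  rw [castMH_apply]
  show ofAdd (ZMod.castHom h2 (ZMod 2) (dbl m h2 a.toAdd)) = 1
  rw [dbl_cast hm h2]
  rfl

lemma dblM_injective (hm : m ≠ 0) (h2 : 2 ∣ m) : Function.Injective (dblM m h2) := by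
  intro a b hab
  exact toAdd.injective (dbl_injective hm h2 hab)

lemma dblM_surj (hm : m ≠ 0) (h2 : 2 ∣ m) (y : Multiplicative (ZMod m))
    (hy : castMH m h2 y = 1) : ∃ a, dblM m h2 a = y := by
  have hy' : ZMod.castHom h2 (ZMod 2) y.toAdd = 0 := by
    have := congrArg toAdd (castMH_apply h2 y ▸ hy)
    simpa using this
  obtain ⟨a, ha⟩ := dbl_surj hm h2 y.toAdd hy'
  exact ⟨ofAdd a, toAdd.injective ha⟩

lemma sq_of_castMH_eq_one [NeZero m] (h2 : 2 ∣ m) (x : Multiplicative (ZMod m))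
    (hx : castMH m h2 x = 1) : ∃ c : Multiplicative (ZMod m), c ^ 2 = x := by
  have hx' : ZMod.castHom h2 (ZMod 2) x.toAdd = 0 := by
    have := congrArg toAdd (castMH_apply h2 x ▸ hx)
    simpa using this
  obtain ⟨c, hc⟩ := (even_iff h2 x.toAdd).1 hx'
  exact ⟨ofAdd c, by rw [pow_two, ← ofAdd_add, hc, ofAdd_toAdd]⟩

lemma classifyS (m : ℕ) (hm : m ≠ 0) (S : Subgroup (MZ m m m))
    (hcyc : ∀ x ∈ S, ((x.2.2, x.1, x.2.1) : MZ m m m) ∈ S)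
    (h1 : ∀ x ∈ S, ((x.1⁻¹, x.2.1⁻¹, x.2.2) : MZ m m m) ∈ S)
    (hproj : ∀ c : Multiplicative (ZMod m), ∃ x ∈ S, x.1 = c) :
    Nonempty (S ≃* MZ m m m) ∨
      (2 ∣ m ∧ Nonempty (S ≃* MZ m m (m / 2))) ∨
      (2 ∣ m ∧ Nonempty (S ≃* MZ m (m / 2) (m / 2))) := by
  haveI : NeZero m := ⟨hm⟩
  -- axis squares belong to S
  have hax3 : ∀ c : Multiplicative (ZMod m), ((1, 1, c ^ 2) : MZ m m m) ∈ S := by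
    intro c
    obtain ⟨x, hx, hx1⟩ := hproj c
    have hx' := hcyc _ (hcyc _ hx)
    have hmm := mul_mem hx' (h1 _ hx')
    have e : ((x.2.1, x.2.2, x.1) : MZ m m m) * ((x.2.1)⁻¹, (x.2.2)⁻¹, x.1) = (1, 1, c ^ 2) := by
      rw [← hx1]
      simp [Prod.ext_iff, pow_two]
    rw [e] at hmm
    exact hmm
  have hax1 : ∀ c : Multiplicative (ZMod m), ((c ^ 2, 1, 1) : MZ m m m) ∈ S :=
    fun c => hcyc _ (hax3 c)
  have hax2 : ∀ c : Multiplicative (ZMod m), ((1, c ^ 2, 1) : MZ m m m) ∈ S :=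
    fun c => hcyc _ (hax1 c)
  have hdecomp : ∀ v : MZ m m m, v = (v.1, 1, 1) * (1, v.2.1, 1) * (1, 1, v.2.2) := by
    intro v; simp [Prod.ext_iff]
  by_cases h2 : 2 ∣ m
  case neg =>
    left
    have hodd_sq : ∀ x : Multiplicative (ZMod m), ∃ c, c ^ 2 = x := by
      intro x
      obtain ⟨c, hc⟩ := odd_sq h2 x.toAdd
      exact ⟨ofAdd c, by rw [pow_two, ← ofAdd_add, hc, ofAdd_toAdd]⟩
    have htop : S = ⊤ := by
      rw [eq_top_iff]
      intro v _
      rw [hdecomp v]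
      obtain ⟨c1, hc1⟩ := hodd_sq v.1
      obtain ⟨c2, hc2⟩ := hodd_sq v.2.1
      obtain ⟨c3, hc3⟩ := hodd_sq v.2.2
      rw [← hc1, ← hc2, ← hc3]
      exact mul_mem (mul_mem (hax1 c1) (hax2 c2)) (hax3 c3)
    exact ⟨(MulEquiv.subgroupCongr htop).trans Subgroup.topEquiv⟩
  case pos =>
    set χ := chi m h2 with hχ
    set V := S.map χ with hVdef
    have hVcyc : ∀ v : MZ 2 2 2, v ∈ V → cycP v ∈ V := by
      rintro v ⟨x, hx, rfl⟩
      exact ⟨(x.2.2, x.1, x.2.1), hcyc x hx, rfl⟩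
    have hVproj : ∃ v ∈ V, v.1 = ofAdd (1 : ZMod 2) := by
      obtain ⟨x, hx, hx1⟩ := hproj (ofAdd (1 : ZMod m))
      refine ⟨χ x, ⟨x, hx, rfl⟩, ?_⟩
      show castMH m h2 x.1 = ofAdd (1 : ZMod 2)
      rw [hx1, castMH_apply]
      show ofAdd (ZMod.castHom h2 (ZMod 2) (1 : ZMod m)) = ofAdd (1 : ZMod 2)
      rw [map_one]
    have hker : ∀ v : MZ m m m, χ v = 1 → v ∈ S := by
      intro v hv
      rw [chi_apply] at hv
      rw [Prod.ext_iff, Prod.ext_iff] at hv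
      obtain ⟨e1, e2, e3⟩ := hv
      obtain ⟨c1, hc1⟩ := sq_of_castMH_eq_one h2 v.1 e1
      obtain ⟨c2, hc2⟩ := sq_of_castMH_eq_one h2 v.2.1 e2
      obtain ⟨c3, hc3⟩ := sq_of_castMH_eq_one h2 v.2.2 e3
      rw [hdecomp v, ← hc1, ← hc2, ← hc3]
      exact mul_mem (mul_mem (hax1 c1) (hax2 c2)) (hax3 c3)
    have hScomap : S = V.comap χ := by
      apply le_antisymm
      · intro x hx
        exact Subgroup.mem_comap.2 ⟨x, hx, rfl⟩
      · intro x hx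
        obtain ⟨s, hs, hsx⟩ := Subgroup.mem_comap.1 hx
        have h1' : χ (x * s⁻¹) = 1 := by
          rw [map_mul, map_inv, hsx, mul_inv_cancel]
        have := mul_mem (hker _ h1') hs
        simpa using this
    rcases classifyV V hVcyc hVproj with hV | hV | hV
    · left
      have htop : S = ⊤ := by
        rw [hScomap, hV, Subgroup.comap_top]
      exact ⟨(MulEquiv.subgroupCongr htop).trans Subgroup.topEquiv⟩
    · right; left
      refine ⟨h2, ?_⟩
      have hmem : ∀ x : MZ m m m,
          x ∈ S ↔ castMH m h2 x.1 * castMH m h2 x.2.1 * castMH m h2 x.2.2 = 1 := by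
        intro x
        rw [hScomap, hV]
        exact Iff.rfl
      -- the parametrizing homomorphism
      set M := Multiplicative (ZMod m)
      set M' := Multiplicative (ZMod (m / 2))
      let q1 : MZ m m (m / 2) →* M := MonoidHom.fst M (M × M')
      let q2 : MZ m m (m / 2) →* M := (MonoidHom.fst M M').comp (MonoidHom.snd M (M × M'))
      let q3 : MZ m m (m / 2) →* M' := (MonoidHom.snd M M').comp (MonoidHom.snd M (M × M'))
      let F : MZ m m (m / 2) →* MZ m m m := q1.prod (q2.prod (q1 * q2 * (dblM m h2).comp q3))
      have hF : ∀ z : MZ m m (m / 2),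
          F z = (z.1, z.2.1, z.1 * z.2.1 * dblM m h2 z.2.2) := fun z => rfl
      have hsq1 : ∀ a b : Multiplicative (ZMod 2), a * b * (a * b * 1) = 1 := by decide
      have hFS : ∀ z : MZ m m (m / 2), F z ∈ S := by
        intro z
        rw [hF z, hmem]
        show castMH m h2 z.1 * castMH m h2 z.2.1 *
          castMH m h2 (z.1 * z.2.1 * dblM m h2 z.2.2) = 1
        rw [map_mul, map_mul, castMH_dblM hm h2]
        exact hsq1 _ _
      let F' : MZ m m (m / 2) →* S := F.codRestrict S hFS
      have hinj : Function.Injective F' := by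
        intro z w hzw
        have h0 : F z = F w := congrArg Subtype.val hzw
        rw [hF z, hF w, Prod.ext_iff, Prod.ext_iff] at h0
        obtain ⟨e1, e2, e3⟩ := h0
        have e3' : dblM m h2 z.2.2 = dblM m h2 w.2.2 := by
          rw [e1, e2] at e3
          exact mul_left_cancel e3
        have := dblM_injective hm h2 e3'
        exact Prod.ext e1 (Prod.ext e2 this)
      have hsurj : Function.Surjective F' := by
        rintro ⟨x, hx⟩
        rw [hmem] at hx
        have hy : castMH m h2 (x.2.2 * (x.1 * x.2.1)⁻¹) = 1 := by
          rw [map_mul, map_inv, map_mul]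
          exact (by decide : ∀ a b c : Multiplicative (ZMod 2),
            a * b * c = 1 → c * (a * b)⁻¹ = 1) _ _ _ hx
        obtain ⟨a, ha⟩ := dblM_surj hm h2 _ hy
        refine ⟨(x.1, x.2.1, a), ?_⟩
        apply Subtype.ext
        show F (x.1, x.2.1, a) = x
        rw [hF]
        simp only [ha]
        rw [Prod.ext_iff, Prod.ext_iff]
        refine ⟨rfl, rfl, ?_⟩
        show x.1 * x.2.1 * (x.2.2 * (x.1 * x.2.1)⁻¹) = x.2.2
        rw [mul_comm, mul_assoc, inv_mul_cancel, mul_one]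
      exact ⟨(MulEquiv.ofBijective F' ⟨hinj, hsurj⟩).symm⟩
    · right; right
      refine ⟨h2, ?_⟩
      have hmem : ∀ x : MZ m m m,
          x ∈ S ↔ (castMH m h2 x.1 = castMH m h2 x.2.1 ∧
            castMH m h2 x.2.1 = castMH m h2 x.2.2) := by
        intro x
        rw [hScomap, hV]
        exact Iff.rfl
      set M := Multiplicative (ZMod m)
      set M' := Multiplicative (ZMod (m / 2))
      let q1 : M × M' × M' →* M := MonoidHom.fst M (M' × M')
      let q2 : M × M' × M' →* M' := (MonoidHom.fst M' M').comp (MonoidHom.snd M (M' × M'))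
      let q3 : M × M' × M' →* M' := (MonoidHom.snd M' M').comp (MonoidHom.snd M (M' × M'))
      let F : M × M' × M' →* MZ m m m :=
        q1.prod ((q1 * (dblM m h2).comp q2).prod (q1 * (dblM m h2).comp q3))
      have hF : ∀ z : M × M' × M',
          F z = (z.1, z.1 * dblM m h2 z.2.1, z.1 * dblM m h2 z.2.2) := fun z => rfl
      have hFS : ∀ z : M × M' × M', F z ∈ S := by
        intro z
        rw [hF z, hmem]
        constructor
        · show castMH m h2 z.1 = castMH m h2 (z.1 * dblM m h2 z.2.1)
          rw [map_mul, castMH_dblM hm h2, mul_one]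
        · show castMH m h2 (z.1 * dblM m h2 z.2.1) = castMH m h2 (z.1 * dblM m h2 z.2.2)
          rw [map_mul, map_mul, castMH_dblM hm h2, castMH_dblM hm h2]
      let F' : M × M' × M' →* S := F.codRestrict S hFS
      have hinj : Function.Injective F' := by
        intro z w hzw
        have h0 : F z = F w := congrArg Subtype.val hzw
        rw [hF z, hF w, Prod.ext_iff, Prod.ext_iff] at h0
        obtain ⟨e1, e2, e3⟩ := h0
        rw [e1] at e2 e3
        have e2' := dblM_injective hm h2 (mul_left_cancel e2)
        have e3' := dblM_injective hm h2 (mul_left_cancel e3)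
        exact Prod.ext e1 (Prod.ext e2' e3')
      have hsurj : Function.Surjective F' := by
        rintro ⟨x, hx⟩
        rw [hmem] at hx
        obtain ⟨d1, d2⟩ := hx
        have hy2 : castMH m h2 (x.2.1 * x.1⁻¹) = 1 := by
          rw [map_mul, map_inv, ← d1, mul_inv_cancel]
        have hy3 : castMH m h2 (x.2.2 * x.1⁻¹) = 1 := by
          rw [map_mul, map_inv, ← d2, ← d1, mul_inv_cancel]
        obtain ⟨a2, ha2⟩ := dblM_surj hm h2 _ hy2
        obtain ⟨a3, ha3⟩ := dblM_surj hm h2 _ hy3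
        refine ⟨(x.1, a2, a3), ?_⟩
        apply Subtype.ext
        show F (x.1, a2, a3) = x
        rw [hF]
        simp only [ha2, ha3]
        rw [Prod.ext_iff, Prod.ext_iff]
        refine ⟨rfl, ?_, ?_⟩
        · show x.1 * (x.2.1 * x.1⁻¹) = x.2.1
          rw [mul_comm, mul_assoc, inv_mul_cancel, mul_one]
        · show x.1 * (x.2.2 * x.1⁻¹) = x.2.2
          rw [mul_comm, mul_assoc, inv_mul_cancel, mul_one]
      exact ⟨(MulEquiv.ofBijective F' ⟨hinj, hsurj⟩).symm⟩

end Stmt11Aux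

open Stmt11Aux

/-- A finite subgroup of the torus `(ℂ*)³` invariant under the `A₄`-action generated by
the cyclic permutation of coordinates and the sign-inversions
`(t₁,t₂,t₃) ↦ (t₁⁻¹,t₂⁻¹,t₃)`, `(t₁,t₂,t₃) ↦ (t₁⁻¹,t₂,t₃⁻¹)` is isomorphic to
`μ_n³`, to `μ_n² × μ_{n/2}` (`n` even), or to `μ_n × μ_{n/2}²` (`n` even),
for some positive integer `n`. -/
theorem stmt11 (Γ : Subgroup T3) [Finite Γ]
    (hcyc : ∀ t : T3, t ∈ Γ → (t.2.2, t.1, t.2.1) ∈ Γ)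
    (hA : ∀ t : T3, t ∈ Γ → (t.1⁻¹, t.2.1⁻¹, t.2.2) ∈ Γ)
    (hB : ∀ t : T3, t ∈ Γ → (t.1⁻¹, t.2.1, t.2.2⁻¹) ∈ Γ) :
    ∃ n : ℕ, 0 < n ∧
      (Nonempty (Γ ≃* MZ n n n) ∨
       (2 ∣ n ∧ Nonempty (Γ ≃* MZ n n (n / 2))) ∨
       (2 ∣ n ∧ Nonempty (Γ ≃* MZ n (n / 2) (n / 2)))) := by
  classical
  set m := Monoid.exponent Γ with hmdef
  have hm : m ≠ 0 := Monoid.exponent_ne_zero_of_finite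
  haveI : NeZero m := ⟨hm⟩
  have hζ0 : IsPrimitiveRoot (Complex.exp (2 * Real.pi * Complex.I / m)) m :=
    Complex.isPrimitiveRoot_exp m hm
  set ζ : ℂˣ := (hζ0.isUnit hm).unit with hζdef
  have hζ : IsPrimitiveRoot ζ m := hζ0.isUnit_unit hm
  let E : Multiplicative (ZMod m) ≃* Subgroup.zpowers ζ :=
    AddEquiv.toMultiplicativeLeft hζ.zmodEquivZPowers
  let ψ : Subgroup.zpowers ζ →* Multiplicative (ZMod m) := E.symm.toMonoidHom
  have hψinj : Function.Injective ψ := E.symm.injective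
  have hpow : ∀ t : Γ, ((t : T3)) ^ m = 1 := by
    intro t
    have h0 : (t ^ m : Γ) = 1 := Monoid.pow_exponent_eq_one t
    have h1 := congrArg (Subtype.val) h0
    simpa using h1
  have hmemz : ∀ u : ℂˣ, u ^ m = 1 → u ∈ Subgroup.zpowers ζ := by
    intro u hu
    rw [hζ.zpowers_eq]
    exact (mem_rootsOfUnity m u).2 hu
  let p1 : Γ →* ℂˣ := (MonoidHom.fst ℂˣ (ℂˣ × ℂˣ)).comp Γ.subtype
  let p2 : Γ →* ℂˣ := ((MonoidHom.fst ℂˣ ℂˣ).comp (MonoidHom.snd ℂˣ (ℂˣ × ℂˣ))).comp Γ.subtype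
  let p3 : Γ →* ℂˣ := ((MonoidHom.snd ℂˣ ℂˣ).comp (MonoidHom.snd ℂˣ (ℂˣ × ℂˣ))).comp Γ.subtype
  have hp1 : ∀ t : Γ, p1 t ∈ Subgroup.zpowers ζ := fun t =>
    hmemz _ (by have := congrArg Prod.fst (hpow t); simpa [p1] using this)
  have hp2 : ∀ t : Γ, p2 t ∈ Subgroup.zpowers ζ := fun t =>
    hmemz _ (by have := congrArg (fun p : T3 => p.2.1) (hpow t); simpa [p2] using this)
  have hp3 : ∀ t : Γ, p3 t ∈ Subgroup.zpowers ζ := fun t =>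
    hmemz _ (by have := congrArg (fun p : T3 => p.2.2) (hpow t); simpa [p3] using this)
  let θ1 : Γ →* Multiplicative (ZMod m) := ψ.comp (p1.codRestrict (Subgroup.zpowers ζ) hp1)
  let θ2 : Γ →* Multiplicative (ZMod m) := ψ.comp (p2.codRestrict (Subgroup.zpowers ζ) hp2)
  let θ3 : Γ →* Multiplicative (ZMod m) := ψ.comp (p3.codRestrict (Subgroup.zpowers ζ) hp3)
  let θ : Γ →* MZ m m m := θ1.prod (θ2.prod θ3)
  have hθapp : ∀ t : Γ, θ t = (ψ ⟨(t : T3).1, hp1 t⟩, ψ ⟨(t : T3).2.1, hp2 t⟩,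
      ψ ⟨(t : T3).2.2, hp3 t⟩) := fun t => rfl
  have hθinj : Function.Injective θ := by
    rw [injective_iff_map_eq_one]
    intro t ht
    rw [hθapp t, Prod.ext_iff, Prod.ext_iff] at ht
    obtain ⟨e1, e2, e3⟩ := ht
    have f1 : (t : T3).1 = 1 := congrArg Subtype.val
      (hψinj (e1.trans (map_one ψ).symm))
    have f2 : (t : T3).2.1 = 1 := congrArg Subtype.val
      (hψinj (e2.trans (map_one ψ).symm))
    have f3 : (t : T3).2.2 = 1 := congrArg Subtype.val
      (hψinj (e3.trans (map_one ψ).symm))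
    apply Subtype.ext
    exact Prod.ext f1 (Prod.ext f2 f3)
  set S := θ.range with hSdef
  have hScyc : ∀ x ∈ S, ((x.2.2, x.1, x.2.1) : MZ m m m) ∈ S := by
    rintro x ⟨t, rfl⟩
    refine ⟨⟨(((t : T3).2.2, (t : T3).1, (t : T3).2.1) : T3), hcyc _ t.2⟩, ?_⟩
    rw [hθapp]
    exact Prod.ext (congrArg ψ (Subtype.ext rfl))
      (Prod.ext (congrArg ψ (Subtype.ext rfl)) (congrArg ψ (Subtype.ext rfl)))
  have hS1 : ∀ x ∈ S, ((x.1⁻¹, x.2.1⁻¹, x.2.2) : MZ m m m) ∈ S := by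
    rintro x ⟨t, rfl⟩
    refine ⟨⟨(((t : T3).1⁻¹, (t : T3).2.1⁻¹, (t : T3).2.2) : T3), hA _ t.2⟩, ?_⟩
    rw [hθapp, hθapp]
    refine Prod.ext ?_ (Prod.ext ?_ ?_)
    · show ψ _ = (ψ ⟨(t : T3).1, hp1 t⟩)⁻¹
      rw [← map_inv]
      exact congrArg ψ (Subtype.ext rfl)
    · show ψ _ = (ψ ⟨(t : T3).2.1, hp2 t⟩)⁻¹
      rw [← map_inv]
      exact congrArg ψ (Subtype.ext rfl)
    · exact congrArg ψ (Subtype.ext rfl)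
  have hSproj : ∀ c : Multiplicative (ZMod m), ∃ x ∈ S, x.1 = c := by
    set P := S.map (MonoidHom.fst (Multiplicative (ZMod m))
      (Multiplicative (ZMod m) × Multiplicative (ZMod m))) with hPdef
    have hP1 : ∀ x ∈ S, x.1 ∈ P := fun x hx => ⟨x, hx, rfl⟩
    have hP2 : ∀ x ∈ S, x.2.1 ∈ P := fun x hx => hP1 _ (hScyc _ (hScyc _ hx))
    have hP3 : ∀ x ∈ S, x.2.2 ∈ P := fun x hx => hP1 _ (hScyc _ hx)
    have hme : m ∣ Monoid.exponent P := by
      refine Monoid.exponent_dvd_iff_forall_pow_eq_one.2 ?_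
      intro t
      have h3 : θ t ∈ S := ⟨t, rfl⟩
      have c1 : (θ t).1 ^ Monoid.exponent P = 1 := Subgroup.pow_exponent_eq_one (hP1 _ h3)
      have c2 : (θ t).2.1 ^ Monoid.exponent P = 1 := Subgroup.pow_exponent_eq_one (hP2 _ h3)
      have c3 : (θ t).2.2 ^ Monoid.exponent P = 1 := Subgroup.pow_exponent_eq_one (hP3 _ h3)
      apply hθinj
      rw [map_pow, map_one]
      exact Prod.ext c1 (Prod.ext c2 c3)
    have hMcard : Nat.card (Multiplicative (ZMod m)) = m := by
      simp [Nat.card_eq_fintype_card, ZMod.card]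
    have hcard : Nat.card P ∣ m := by
      have h4 := Subgroup.card_subgroup_dvd_card P
      rwa [hMcard] at h4
    have hPm : Nat.card P = m :=
      Nat.dvd_antisymm hcard (hme.trans Group.exponent_dvd_nat_card)
    have hPtop : P = ⊤ := by
      apply Subgroup.eq_top_of_card_eq
      rw [hPm, hMcard]
    intro c
    have hc : c ∈ P := hPtop ▸ Subgroup.mem_top c
    obtain ⟨x, hx, hx1⟩ := hc
    exact ⟨x, hx, hx1⟩
  have eΓ : Γ ≃* S := MonoidHom.ofInjective hθinj
  rcases classifyS m hm S hScyc hS1 hSproj with h | ⟨hd, h⟩ | ⟨hd, h⟩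
  · obtain ⟨eS⟩ := h
    exact ⟨m, Nat.pos_of_ne_zero hm, Or.inl ⟨eΓ.trans eS⟩⟩
  · obtain ⟨eS⟩ := h
    exact ⟨m, Nat.pos_of_ne_zero hm, Or.inr (Or.inl ⟨hd, ⟨eΓ.trans eS⟩⟩)⟩
  · obtain ⟨eS⟩ := h
    exact ⟨m, Nat.pos_of_ne_zero hm, Or.inr (Or.inr ⟨hd, ⟨eΓ.trans eS⟩⟩)⟩
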